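/- arXiv:1312.4406 — 5 statements merged into one kernel-verified Lean document; each statement's English description precedes it below -/
import Mathlib

section
/- Let A ∈ ℝ^{m×n}, C ∈ ℝ^{m×p}, and set B = (I − A A⁺) C and L = A⁺ C (I − B⁺ B). Then the Moore-Penrose inverse of the column-partitioned matrix [A | C] equals the block matrix whose top block is (I + L Lᵀ)^{-1}(A⁺ − A⁺ C B⁺) and whose bottom block is Lᵀ (I + L Lᵀ)^{-1}(A⁺ − A⁺ C B⁺) + B⁺. -/
open Matrix

noncomputable def eucNorm {ι : Type*} [Fintype ι] (v : ι → ℝ) : ℝ :=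
  ‖(WithLp.equiv 2 (ι → ℝ)).symm v‖

/-- The four Penrose equations characterizing the Moore-Penrose inverse. -/
def IsMoorePenrose {ι κ : Type*} [Fintype ι] [Fintype κ]
    (A : Matrix ι κ ℝ) (Ap : Matrix κ ι ℝ) : Prop :=
  A * Ap * A = A ∧ Ap * A * Ap = Ap ∧ (A * Ap)ᵀ = A * Ap ∧ (Ap * A)ᵀ = Ap * A

theorem pinv_partitioned {m n p : ℕ} (A : Matrix (Fin m) (Fin n) ℝ)
    (C : Matrix (Fin m) (Fin p) ℝ)
    (Ap : Matrix (Fin n) (Fin m) ℝ) (hAp : IsMoorePenrose A Ap)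
    (B : Matrix (Fin m) (Fin p) ℝ) (hB : B = (1 - A * Ap) * C)
    (Bp : Matrix (Fin p) (Fin m) ℝ) (hBp : IsMoorePenrose B Bp)
    (L : Matrix (Fin n) (Fin p) ℝ) (hL : L = Ap * C * (1 - Bp * B)) :
    IsMoorePenrose (fromCols A C)
      (fromRows
        ((1 + L * Lᵀ)⁻¹ * (Ap - Ap * C * Bp))
        (Lᵀ * (1 + L * Lᵀ)⁻¹ * (Ap - Ap * C * Bp) + Bp)) := by
  obtain ⟨hA1, hA2, hA3, hA4⟩ := hAp
  obtain ⟨hB1, hB2, hB3, hB4⟩ := hBp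
  -- basic derived identities
  have a1e : A * (Ap * A) = A := by rw [← Matrix.mul_assoc, hA1]
  have a2e : Ap * (A * Ap) = Ap := by rw [← Matrix.mul_assoc, hA2]
  have b1e : B * (Bp * B) = B := by rw [← Matrix.mul_assoc, hB1]
  have b2e : Bp * (B * Bp) = Bp := by rw [← Matrix.mul_assoc, hB2]
  have apbe : Ap * B = 0 := by
    rw [hB]
    simp only [Matrix.sub_mul, Matrix.one_mul, Matrix.mul_sub, ← Matrix.mul_assoc, hA2, sub_self]
  have apbc : ∀ {α : Type} (X : Matrix (Fin p) α ℝ), Ap * (B * X) = 0 := fun X => by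
    rw [← Matrix.mul_assoc, apbe, Matrix.zero_mul]
  have btaE : Bᵀ * A = 0 := by
    rw [hB, transpose_mul, transpose_sub, transpose_one, hA3, Matrix.mul_assoc, Matrix.sub_mul, Matrix.one_mul,
      hA1, sub_self, Matrix.mul_zero]
  have hbba : B * (Bp * A) = 0 := by
    rw [← Matrix.mul_assoc, ← hB3, transpose_mul, Matrix.mul_assoc, btaE, Matrix.mul_zero]
  have bpae : Bp * A = 0 := by
    rw [← hB2, Matrix.mul_assoc, Matrix.mul_assoc, hbba, Matrix.mul_zero]
  have bpac : ∀ {α : Type} (X : Matrix (Fin n) α ℝ), Bp * (A * X) = 0 := fun X => by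
    rw [← Matrix.mul_assoc, bpae, Matrix.zero_mul]
  have blte : B * Lᵀ = 0 := by
    rw [hL, transpose_mul, transpose_sub, transpose_one, hB4, ← Matrix.mul_assoc, Matrix.mul_sub, Matrix.mul_one,
      ← Matrix.mul_assoc, hB1, sub_self, Matrix.zero_mul]
  have bpce : Bp * C = Bp * B := by
    rw [hB]
    simp only [Matrix.sub_mul, Matrix.one_mul, Matrix.mul_sub, ← Matrix.mul_assoc, bpae, Matrix.zero_mul, sub_zero]
  have hC : A * (Ap * C) + B = C := by
    rw [hB]
    simp only [Matrix.sub_mul, Matrix.one_mul, Matrix.mul_assoc]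
    abel
  -- C * Lᵀ = A * (L * Lᵀ)
  have hALc : A * L = A * (Ap * C) - A * (Ap * (C * (Bp * B))) := by
    rw [hL]
    simp only [Matrix.mul_sub, Matrix.mul_one, Matrix.mul_assoc]
  have hcltA : C * Lᵀ = A * (Ap * (C * Lᵀ)) := by
    conv_lhs => rw [← hC]
    simp only [Matrix.add_mul, Matrix.mul_assoc, blte, add_zero]
  have hallt : A * (L * Lᵀ) = A * (Ap * (C * Lᵀ)) := by
    rw [← Matrix.mul_assoc, hALc]
    simp only [Matrix.sub_mul, Matrix.mul_assoc, blte, Matrix.mul_zero, sub_zero]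
  have hclt : C * Lᵀ = A * (L * Lᵀ) := hcltA.trans hallt.symm
  -- invertibility of 1 + L Lᵀ
  have hpsd : (L * Lᵀ).PosSemidef := by
    have h := Matrix.posSemidef_self_mul_conjTranspose L
    rwa [Matrix.conjTranspose_eq_transpose_of_trivial] at h
  have hpd : (1 + L * Lᵀ).PosDef := Matrix.PosDef.add_posSemidef Matrix.PosDef.one hpsd
  have hdet : IsUnit (1 + L * Lᵀ).det := hpd.det_pos.ne'.isUnit
  have hK1 : (1 + L * Lᵀ)⁻¹ * (1 + L * Lᵀ) = 1 := Matrix.nonsing_inv_mul _ hdet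
  have hK2 : (1 + L * Lᵀ) * (1 + L * Lᵀ)⁻¹ = 1 := Matrix.mul_nonsing_inv _ hdet
  have hKsym : ((1 + L * Lᵀ)⁻¹)ᵀ = (1 + L * Lᵀ)⁻¹ := by
    rw [Matrix.transpose_nonsing_inv, transpose_add, transpose_one, transpose_mul,
      transpose_transpose]
  -- commutation of (1+LLᵀ)⁻¹ with Ap*A
  have hApALe : Ap * (A * L) = L := by
    rw [hL]
    simp only [← Matrix.mul_assoc, hA2]
  have hApAL2 : (Ap * A) * L = L := by rw [Matrix.mul_assoc]; exact hApALe
  have hApALLt : (Ap * A) * (L * Lᵀ) = L * Lᵀ := by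
    rw [← Matrix.mul_assoc, Matrix.mul_assoc Ap A L, hApALe]
  have hLLtApA : (L * Lᵀ) * (Ap * A) = L * Lᵀ := by
    have h := congrArg Matrix.transpose hApALLt
    rwa [transpose_mul, transpose_mul, transpose_transpose, hA4] at h
  have hcom : (Ap * A) * (1 + L * Lᵀ) = (1 + L * Lᵀ) * (Ap * A) := by
    rw [Matrix.mul_add, Matrix.add_mul, Matrix.mul_one, Matrix.one_mul, hApALLt, hLLtApA]
  have Kcomm : (Ap * A) * (1 + L * Lᵀ)⁻¹ = (1 + L * Lᵀ)⁻¹ * (Ap * A) := by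
    calc (Ap * A) * (1 + L * Lᵀ)⁻¹
        = (1 : Matrix (Fin n) (Fin n) ℝ) * ((Ap * A) * (1 + L * Lᵀ)⁻¹) := by rw [Matrix.one_mul]
      _ = ((1 + L * Lᵀ)⁻¹ * (1 + L * Lᵀ)) * ((Ap * A) * (1 + L * Lᵀ)⁻¹) := by rw [hK1]
      _ = (1 + L * Lᵀ)⁻¹ * (((1 + L * Lᵀ) * (Ap * A)) * (1 + L * Lᵀ)⁻¹) := by
          simp only [Matrix.mul_assoc]
      _ = (1 + L * Lᵀ)⁻¹ * (((Ap * A) * (1 + L * Lᵀ)) * (1 + L * Lᵀ)⁻¹) := by rw [← hcom]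
      _ = (1 + L * Lᵀ)⁻¹ * (Ap * A) := by
          rw [Matrix.mul_assoc (Ap * A) (1 + L * Lᵀ) (1 + L * Lᵀ)⁻¹, hK2, Matrix.mul_one]
  have hLtApA : Lᵀ * (Ap * A) = Lᵀ := by
    have h := congrArg Matrix.transpose hApAL2
    rwa [transpose_mul, hA4] at h
  -- the key identity (A + C Lᵀ)(1+LLᵀ)⁻¹ = A
  have hKD : (A + C * Lᵀ) * (1 + L * Lᵀ)⁻¹ = A := by
    have h : A + C * Lᵀ = A * (1 + L * Lᵀ) := by rw [Matrix.mul_add, Matrix.mul_one, hclt]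
    rw [h, Matrix.mul_assoc, hK2, Matrix.mul_one]
  -- M * X = A*Ap + B*Bp
  have hCBp : C * Bp = A * (Ap * (C * Bp)) + B * Bp := by
    conv_lhs => rw [← hC]
    simp only [Matrix.add_mul, Matrix.mul_assoc]
  have hMX : A * ((1 + L * Lᵀ)⁻¹ * (Ap - Ap * C * Bp)) +
      C * (Lᵀ * (1 + L * Lᵀ)⁻¹ * (Ap - Ap * C * Bp) + Bp) = A * Ap + B * Bp := by
    have h1 : A * ((1 + L * Lᵀ)⁻¹ * (Ap - Ap * C * Bp)) +
        C * (Lᵀ * (1 + L * Lᵀ)⁻¹ * (Ap - Ap * C * Bp)) =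
        ((A + C * Lᵀ) * (1 + L * Lᵀ)⁻¹) * (Ap - Ap * C * Bp) := by
      simp only [Matrix.add_mul, Matrix.mul_assoc]
    calc A * ((1 + L * Lᵀ)⁻¹ * (Ap - Ap * C * Bp)) +
        C * (Lᵀ * (1 + L * Lᵀ)⁻¹ * (Ap - Ap * C * Bp) + Bp)
        = (A * ((1 + L * Lᵀ)⁻¹ * (Ap - Ap * C * Bp)) +
            C * (Lᵀ * (1 + L * Lᵀ)⁻¹ * (Ap - Ap * C * Bp))) + C * Bp := by
          rw [Matrix.mul_add, ← add_assoc]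
      _ = ((A + C * Lᵀ) * (1 + L * Lᵀ)⁻¹) * (Ap - Ap * C * Bp) + C * Bp := by rw [h1]
      _ = A * (Ap - Ap * C * Bp) + C * Bp := by rw [hKD]
      _ = A * Ap + B * Bp := by
          rw [Matrix.mul_sub, hCBp]
          simp only [Matrix.mul_assoc]
          abel
  -- component identities for the second and fourth equations
  have hDS : (Ap - Ap * C * Bp) * (A * Ap + B * Bp) = Ap - Ap * C * Bp := by
    simp only [Matrix.sub_mul, Matrix.mul_add, Matrix.mul_assoc, a2e, apbc, bpac, b2e, Matrix.mul_zero, add_zero, zero_add]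
    abel
  have hBpS : Bp * (A * Ap + B * Bp) = Bp := by
    simp only [Matrix.mul_add, bpac, b2e, zero_add]
  have hDA : (Ap - Ap * C * Bp) * A = Ap * A := by
    simp only [Matrix.sub_mul, Matrix.mul_assoc, bpae, Matrix.mul_zero, sub_zero]
  have hDC : (Ap - Ap * C * Bp) * C = L := by
    rw [hL]
    simp only [Matrix.sub_mul, Matrix.mul_sub, Matrix.mul_one, Matrix.mul_assoc, bpce]
  have hX1A : ((1 + L * Lᵀ)⁻¹ * (Ap - Ap * C * Bp)) * A = (1 + L * Lᵀ)⁻¹ * (Ap * A) := by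
    rw [Matrix.mul_assoc, hDA]
  have hX1C : ((1 + L * Lᵀ)⁻¹ * (Ap - Ap * C * Bp)) * C = (1 + L * Lᵀ)⁻¹ * L := by
    rw [Matrix.mul_assoc, hDC]
  have hX2A : (Lᵀ * (1 + L * Lᵀ)⁻¹ * (Ap - Ap * C * Bp) + Bp) * A = Lᵀ * (1 + L * Lᵀ)⁻¹ := by
    rw [Matrix.add_mul, Matrix.mul_assoc (Lᵀ * (1 + L * Lᵀ)⁻¹), hDA, bpae, add_zero, Matrix.mul_assoc, ← Kcomm,
      ← Matrix.mul_assoc, hLtApA]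
  have hX2C : (Lᵀ * (1 + L * Lᵀ)⁻¹ * (Ap - Ap * C * Bp) + Bp) * C =
      Lᵀ * ((1 + L * Lᵀ)⁻¹ * L) + Bp * B := by
    rw [Matrix.add_mul, Matrix.mul_assoc (Lᵀ * (1 + L * Lᵀ)⁻¹), hDC, bpce, Matrix.mul_assoc]
  refine ⟨?_, ?_, ?_, ?_⟩
  · -- M X M = M
    have p1 : (A * Ap + B * Bp) * A = A := by
      simp only [Matrix.add_mul, Matrix.mul_assoc, a1e, bpae, Matrix.mul_zero, add_zero]
    have p2 : (A * Ap + B * Bp) * C = C := by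
      simp only [Matrix.add_mul, Matrix.mul_assoc, bpce, b1e]
      exact hC
    rw [fromCols_mul_fromRows, hMX, mul_fromCols, p1, p2]
  · -- X M X = X
    have q1 : ((1 + L * Lᵀ)⁻¹ * (Ap - Ap * C * Bp)) * (A * Ap + B * Bp) =
        (1 + L * Lᵀ)⁻¹ * (Ap - Ap * C * Bp) := by
      rw [Matrix.mul_assoc, hDS]
    have q2 : (Lᵀ * (1 + L * Lᵀ)⁻¹ * (Ap - Ap * C * Bp) + Bp) * (A * Ap + B * Bp) =
        Lᵀ * (1 + L * Lᵀ)⁻¹ * (Ap - Ap * C * Bp) + Bp := by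
      rw [Matrix.add_mul, Matrix.mul_assoc (Lᵀ * (1 + L * Lᵀ)⁻¹) (Ap - Ap * C * Bp) (A * Ap + B * Bp),
        hDS, hBpS]
    rw [Matrix.mul_assoc, fromCols_mul_fromRows, hMX, fromRows_mul, q1, q2]
  · -- (M X)ᵀ = M X
    rw [fromCols_mul_fromRows, hMX, transpose_add, hA3, hB3]
  · -- (X M)ᵀ = X M
    have s1 : (((1 + L * Lᵀ)⁻¹ * (Ap - Ap * C * Bp)) * A)ᵀ =
        ((1 + L * Lᵀ)⁻¹ * (Ap - Ap * C * Bp)) * A := by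
      rw [hX1A, transpose_mul, hA4, hKsym, Kcomm]
    have s2 : ((Lᵀ * (1 + L * Lᵀ)⁻¹ * (Ap - Ap * C * Bp) + Bp) * A)ᵀ =
        ((1 + L * Lᵀ)⁻¹ * (Ap - Ap * C * Bp)) * C := by
      rw [hX2A, hX1C, transpose_mul, transpose_transpose, hKsym]
    have s3 : (((1 + L * Lᵀ)⁻¹ * (Ap - Ap * C * Bp)) * C)ᵀ =
        (Lᵀ * (1 + L * Lᵀ)⁻¹ * (Ap - Ap * C * Bp) + Bp) * A := by
      rw [hX1C, hX2A, transpose_mul, hKsym]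
    have s4 : ((Lᵀ * (1 + L * Lᵀ)⁻¹ * (Ap - Ap * C * Bp) + Bp) * C)ᵀ =
        (Lᵀ * (1 + L * Lᵀ)⁻¹ * (Ap - Ap * C * Bp) + Bp) * C := by
      rw [hX2C, transpose_add, transpose_mul, transpose_mul, transpose_transpose, hKsym,
        hB4, Matrix.mul_assoc]
    rw [fromRows_mul_fromCols, fromBlocks_transpose, s1, s2, s3, s4]
end

section
/- Let V_b = {b + B u : u ∈ ℝ^{l₁}} and V_c = {c − C v : v ∈ ℝ^{l₂}} be linear varieties in ℝ^m, A = [B | C], d = c − b, and x* = A⁺ d with components x* = (u*, v*). Then b* = b + B u* ∈ V_b and c* = c − C v* ∈ V_c form a best approximation pair: ‖b* − c*‖ = inf{‖p − q‖ : p ∈ V_b, q ∈ V_c}. -/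
open Matrix

lemma eucNorm_eq_sqrt {ι : Type*} [Fintype ι] (v : ι → ℝ) :
    eucNorm v = Real.sqrt (v ⬝ᵥ v) := by
  simp [eucNorm, EuclideanSpace.norm_eq, dotProduct, Real.norm_eq_abs, sq_abs,
    WithLp.equiv_symm_apply, pow_two]

lemma eucNorm_nonneg {ι : Type*} [Fintype ι] (v : ι → ℝ) : 0 ≤ eucNorm v :=
  norm_nonneg _

lemma key_ineq {ι κ : Type*} [Fintype ι] [Fintype κ]
    (A : Matrix ι κ ℝ) (Ap : Matrix κ ι ℝ) (hA : Aᵀ * (A * Ap) = Aᵀ)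
    (d : ι → ℝ) (x : κ → ℝ) :
    eucNorm (A.mulVec (Ap.mulVec d) - d) ≤ eucNorm (A.mulVec x - d) := by
  set e : ι → ℝ := A.mulVec (Ap.mulVec d) - d with he
  set y : κ → ℝ := x - Ap.mulVec d with hy
  have hdecomp : A.mulVec x - d = e + A.mulVec y := by
    rw [hy, mulVec_sub, he]; abel
  have hAe : Aᵀ.mulVec e = 0 := by
    rw [he, mulVec_sub, mulVec_mulVec, mulVec_mulVec, Matrix.mul_assoc, hA, sub_self]
  have hcross : e ⬝ᵥ A.mulVec y = 0 := by
    rw [dotProduct_mulVec, ← mulVec_transpose, hAe, zero_dotProduct]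
  have hsq : (A.mulVec y) ⬝ᵥ (A.mulVec y) ≥ 0 := by
    apply Finset.sum_nonneg
    intro i _
    exact mul_self_nonneg _
  rw [eucNorm_eq_sqrt, eucNorm_eq_sqrt, hdecomp]
  apply Real.sqrt_le_sqrt
  have : (e + A.mulVec y) ⬝ᵥ (e + A.mulVec y)
      = e ⬝ᵥ e + (e ⬝ᵥ A.mulVec y + (A.mulVec y ⬝ᵥ e + A.mulVec y ⬝ᵥ A.mulVec y)) := by
    simp [add_dotProduct, dotProduct_add]; ring
  rw [this, hcross, dotProduct_comm (A.mulVec y) e, hcross]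
  linarith

theorem best_approximation_pair_via_pinv {m l₁ l₂ : ℕ} (b c : Fin m → ℝ)
    (B : Matrix (Fin m) (Fin l₁) ℝ) (C : Matrix (Fin m) (Fin l₂) ℝ)
    (Ap : Matrix (Fin l₁ ⊕ Fin l₂) (Fin m) ℝ)
    (hAp : IsMoorePenrose (fromCols B C) Ap)
    (xstar : Fin l₁ ⊕ Fin l₂ → ℝ) (hx : xstar = Ap.mulVec (c - b))
    (ustar : Fin l₁ → ℝ) (hu : ustar = fun i => xstar (Sum.inl i))
    (vstar : Fin l₂ → ℝ) (hv : vstar = fun j => xstar (Sum.inr j)) :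
    (b + B.mulVec ustar) ∈ {p | ∃ u, p = b + B.mulVec u} ∧
      (c - C.mulVec vstar) ∈ {q | ∃ v, q = c - C.mulVec v} ∧
      eucNorm ((b + B.mulVec ustar) - (c - C.mulVec vstar)) =
        sInf {r : ℝ | ∃ u v, r = eucNorm ((b + B.mulVec u) - (c - C.mulVec v))} := by
  set A := fromCols B C with hA
  have hAt : Aᵀ * (A * Ap) = Aᵀ := by
    calc Aᵀ * (A * Ap) = Aᵀ * (A * Ap)ᵀ := by rw [hAp.2.2.1]
    _ = ((A * Ap) * A)ᵀ := by rw [← transpose_mul]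
    _ = Aᵀ := by rw [hAp.1]
  have helim : Sum.elim ustar vstar = xstar := by
    funext i; cases i <;> simp [hu, hv]
  have hrw : ∀ (u : Fin l₁ → ℝ) (v : Fin l₂ → ℝ),
      (b + B.mulVec u) - (c - C.mulVec v) = A.mulVec (Sum.elim u v) - (c - b) := by
    intro u v
    rw [hA, fromCols_mulVec_sumElim]
    abel
  refine ⟨⟨ustar, rfl⟩, ⟨vstar, rfl⟩, ?_⟩
  apply le_antisymm
  · refine le_csInf ⟨eucNorm ((b + B.mulVec ustar) - (c - C.mulVec vstar)), ustar, vstar, rfl⟩ ?_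
    rintro r ⟨u, v, rfl⟩
    rw [hrw, hrw, helim, hx]
    exact key_ineq A Ap hAt (c - b) (Sum.elim u v)
  · apply csInf_le
    · exact ⟨0, by rintro r ⟨u, v, rfl⟩; exact eucNorm_nonneg _⟩
    · exact ⟨ustar, vstar, rfl⟩
end

section
/- With notation as above, the Euclidean distance between the linear varieties V_b and V_c satisfies d(V_b, V_c) = ‖b* − c*‖ = ‖A A⁺ d − d‖, where d = c − b, A = [B | C], b* = b + B u*, c* = c − C v*, and (u*, v*) = A⁺ d. -/
open Matrix

lemma inner_eq_dot {ι : Type*} [Fintype ι] (x y : ι → ℝ) :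
    (inner ℝ ((WithLp.equiv 2 (ι → ℝ)).symm x) ((WithLp.equiv 2 (ι → ℝ)).symm y) : ℝ) = x ⬝ᵥ y := by
  simp [PiLp.inner_apply, RCLike.inner_apply, dotProduct, mul_comm]

lemma eucNorm_right_le {ι : Type*} [Fintype ι] (a b : ι → ℝ) (h : a ⬝ᵥ b = 0) :
    eucNorm b ≤ eucNorm (a + b) := by
  unfold eucNorm
  have he : (WithLp.equiv 2 (ι → ℝ)).symm (a + b)
      = (WithLp.equiv 2 (ι → ℝ)).symm a + (WithLp.equiv 2 (ι → ℝ)).symm b := by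
    simp
  rw [he]
  have h0 : (inner ℝ ((WithLp.equiv 2 (ι → ℝ)).symm a) ((WithLp.equiv 2 (ι → ℝ)).symm b) : ℝ) = 0 := by
    rw [inner_eq_dot]; exact h
  have hsq := norm_add_sq_eq_norm_sq_add_norm_sq_real h0
  nlinarith [norm_nonneg ((WithLp.equiv 2 (ι → ℝ)).symm a + (WithLp.equiv 2 (ι → ℝ)).symm b),
    norm_nonneg ((WithLp.equiv 2 (ι → ℝ)).symm b), norm_nonneg ((WithLp.equiv 2 (ι → ℝ)).symm a)]

theorem distance_formula {m l₁ l₂ : ℕ} (b c : Fin m → ℝ)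
    (B : Matrix (Fin m) (Fin l₁) ℝ) (C : Matrix (Fin m) (Fin l₂) ℝ)
    (A : Matrix (Fin m) (Fin l₁ ⊕ Fin l₂) ℝ) (hA : A = fromCols B C)
    (Ap : Matrix (Fin l₁ ⊕ Fin l₂) (Fin m) ℝ) (hAp : IsMoorePenrose A Ap)
    (d : Fin m → ℝ) (hd : d = c - b)
    (xstar : Fin l₁ ⊕ Fin l₂ → ℝ) (hx : xstar = Ap.mulVec d)
    (ustar : Fin l₁ → ℝ) (hu : ustar = fun i => xstar (Sum.inl i))
    (vstar : Fin l₂ → ℝ) (hv : vstar = fun j => xstar (Sum.inr j))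
    (bstar cstar : Fin m → ℝ)
    (hb : bstar = b + B.mulVec ustar) (hc : cstar = c - C.mulVec vstar) :
    sInf {r : ℝ | ∃ u v, r = eucNorm ((b + B.mulVec u) - (c - C.mulVec v))} =
        eucNorm (bstar - cstar) ∧
      eucNorm (bstar - cstar) = eucNorm (A.mulVec (Ap.mulVec d) - d) := by
  obtain ⟨h1, _, h3, _⟩ := hAp
  have hxsum : xstar = Sum.elim ustar vstar := by
    funext i; cases i <;> simp [hu, hv]
  have hrep : ∀ u v, (b + B.mulVec u) - (c - C.mulVec v) = A.mulVec (Sum.elim u v) - d := by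
    intro u v
    rw [hA, hd, fromCols_mulVec_sumElim]; abel
  have hbc : bstar - cstar = A.mulVec (Ap.mulVec d) - d := by
    rw [hb, hc, hrep ustar vstar, ← hxsum, hx]
  have hAtP : Aᵀ * (A * Ap) = Aᵀ := by
    rw [← h3, ← transpose_mul]
    rw [show A * Ap * A = A from h1]
  have h0 : Aᵀ.mulVec (A.mulVec (Ap.mulVec d) - d) = 0 := by
    rw [Matrix.mulVec_sub, Matrix.mulVec_mulVec, Matrix.mulVec_mulVec, Matrix.mul_assoc, hAtP]
    simp
  have key : ∀ x, eucNorm (A.mulVec (Ap.mulVec d) - d) ≤ eucNorm (A.mulVec x - d) := by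
    intro x
    have hdot : (A.mulVec (x - Ap.mulVec d)) ⬝ᵥ (A.mulVec (Ap.mulVec d) - d) = 0 := by
      calc (A.mulVec (x - Ap.mulVec d)) ⬝ᵥ (A.mulVec (Ap.mulVec d) - d)
          = (x - Ap.mulVec d) ᵥ* Aᵀ ⬝ᵥ (A.mulVec (Ap.mulVec d) - d) := by
            rw [Matrix.vecMul_transpose]
        _ = (x - Ap.mulVec d) ⬝ᵥ Aᵀ.mulVec (A.mulVec (Ap.mulVec d) - d) := by
            rw [Matrix.dotProduct_mulVec]
        _ = 0 := by rw [h0]; simp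
    have hdecomp : A.mulVec x - d
        = A.mulVec (x - Ap.mulVec d) + (A.mulVec (Ap.mulVec d) - d) := by
      rw [Matrix.mulVec_sub]; abel
    rw [hdecomp]
    exact eucNorm_right_le _ _ hdot
  have hmem : eucNorm (bstar - cstar) ∈
      {r : ℝ | ∃ u v, r = eucNorm ((b + B.mulVec u) - (c - C.mulVec v))} := by
    exact ⟨ustar, vstar, by rw [hb, hc]⟩
  have hlb : ∀ r ∈ {r : ℝ | ∃ u v, r = eucNorm ((b + B.mulVec u) - (c - C.mulVec v))},
      eucNorm (bstar - cstar) ≤ r := by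
    rintro r ⟨u, v, rfl⟩
    rw [hbc, hrep]
    exact key _
  refine ⟨le_antisymm (csInf_le ?_ hmem) (le_csInf ⟨_, hmem⟩ hlb), by rw [hbc]⟩
  exact ⟨0, by rintro r ⟨u, v, rfl⟩; exact eucNorm_nonneg _⟩
end

section
/- Consider in ℝ³ the lines L₁ = {(t, 0, 1) : t ∈ ℝ} and L₂ = {(0, s, 0) : s ∈ ℝ}. Writing L₁ = {b + B u} with b = (0,0,1), B = column (1,0,0), and L₂ = {c − C v} with c = (0,0,0), C = column (0,−1,0), and A = [B | C], d = c − b, the minimal-norm least squares solution x* = A⁺ d satisfies ‖x*‖ ≠ d(L₁, L₂); in fact ‖x*‖ = 0 while d(L₁, L₂) = 1. -/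
open Matrix

lemma eucNorm_eq {ι : Type*} [Fintype ι] (v : ι → ℝ) :
    eucNorm v = Real.sqrt (∑ i, (v i)^2) := by
  rw [eucNorm, EuclideanSpace.norm_eq]
  congr 1
  apply Finset.sum_congr rfl
  intro i _
  rw [Real.norm_eq_abs, sq_abs]
  rfl

lemma euc3 (t s : ℝ) :
    eucNorm (![t, 0, 1] - ![0, s, 0]) = Real.sqrt (t^2 + s^2 + 1) := by
  rw [eucNorm_eq, Fin.sum_univ_three]
  norm_num
  simp [Matrix.cons_val_two, Matrix.vecHead, Matrix.vecTail]

theorem counterexample_norm_xstar_ne_distance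
    (B : Matrix (Fin 3) (Fin 1) ℝ) (hB : B = !![(1:ℝ); 0; 0])
    (C : Matrix (Fin 3) (Fin 1) ℝ) (hC : C = !![(0:ℝ); -1; 0])
    (b : Fin 3 → ℝ) (hb : b = ![0, 0, 1])
    (c : Fin 3 → ℝ) (hc : c = ![0, 0, 0])
    (Ap : Matrix (Fin 1 ⊕ Fin 1) (Fin 3) ℝ)
    (hAp : IsMoorePenrose (fromCols B C) Ap)
    (xstar : Fin 1 ⊕ Fin 1 → ℝ) (hx : xstar = Ap.mulVec (c - b)) :
    eucNorm xstar = 0 ∧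
      sInf {r : ℝ | ∃ t s : ℝ, r = eucNorm (![t, 0, 1] - ![0, s, 0])} = 1 ∧
      eucNorm xstar ≠
        sInf {r : ℝ | ∃ t s : ℝ, r = eucNorm (![t, 0, 1] - ![0, s, 0])} := by
  obtain ⟨h1, h2, h3, h4⟩ := hAp
  set A := fromCols B C with hA
  have hAtd : Aᵀ.mulVec (c - b) = 0 := by
    subst hB hC hb hc
    funext j
    cases j <;>
    simp [Matrix.mulVec, dotProduct, Fin.sum_univ_three, hA, fromCols, Matrix.vecHead, Matrix.vecTail]
  have hxz : xstar = 0 := by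
    have hAp' : Ap = Ap * Apᵀ * Aᵀ := by
      calc Ap = Ap * (A * Ap) := by rw [← Matrix.mul_assoc, h2]
        _ = Ap * (A * Ap)ᵀ := by rw [h3]
        _ = Ap * Apᵀ * Aᵀ := by rw [Matrix.transpose_mul, Matrix.mul_assoc]
    rw [hx, hAp', Matrix.mul_assoc, ← Matrix.mulVec_mulVec, ← Matrix.mulVec_mulVec, hAtd]
    simp
  have hS : ∀ r ∈ {r : ℝ | ∃ t s : ℝ, r = eucNorm (![t, 0, 1] - ![0, s, 0])}, 1 ≤ r := by
    rintro r ⟨t, s, rfl⟩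
    rw [euc3]
    have h : Real.sqrt 1 ≤ Real.sqrt (t^2 + s^2 + 1) :=
      Real.sqrt_le_sqrt (by nlinarith [sq_nonneg t, sq_nonneg s])
    simpa using h
  have h1mem : (1:ℝ) ∈ {r : ℝ | ∃ t s : ℝ, r = eucNorm (![t, 0, 1] - ![0, s, 0])} := by
    refine ⟨0, 0, ?_⟩
    rw [euc3]; norm_num
  have hinf : sInf {r : ℝ | ∃ t s : ℝ, r = eucNorm (![t, 0, 1] - ![0, s, 0])} = 1 := by
    apply le_antisymm
    · exact csInf_le ⟨1, hS⟩ h1mem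
    · exact le_csInf ⟨1, h1mem⟩ hS
  have hnz : eucNorm xstar = 0 := by
    rw [hxz, eucNorm_eq]; simp
  exact ⟨hnz, hinf, by rw [hnz, hinf]; norm_num⟩
end

section
/- For the partitioned matrix [A | C] with B = (I − A A⁺) C, the column space of [A | C] is the orthogonal direct sum of the column space of A and the column space of B. -/
open Matrix

theorem column_space_orthogonal_decomposition {m n p : ℕ} (A : Matrix (Fin m) (Fin n) ℝ)
    (C : Matrix (Fin m) (Fin p) ℝ)
    (Ap : Matrix (Fin n) (Fin m) ℝ) (hAp : IsMoorePenrose A Ap)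
    (B : Matrix (Fin m) (Fin p) ℝ) (hB : B = (1 - A * Ap) * C) :
    LinearMap.range (fromCols A C).mulVecLin =
        LinearMap.range A.mulVecLin ⊔ LinearMap.range B.mulVecLin ∧
      ∀ x ∈ LinearMap.range A.mulVecLin, ∀ y ∈ LinearMap.range B.mulVecLin,
        dotProduct x y = 0 := by
  obtain ⟨h1, h2, h3, h4⟩ := hAp
  have hAtB : Aᵀ * B = 0 := by
    have : Aᵀ * (A * Ap) = Aᵀ := by
      rw [← h3, ← transpose_mul, h1]
    rw [hB, ← Matrix.mul_assoc, Matrix.mul_sub, Matrix.mul_one, this, sub_self, Matrix.zero_mul]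
  constructor
  · apply le_antisymm
    · rintro z ⟨w, rfl⟩
      have hw : w = Sum.elim (w ∘ Sum.inl) (w ∘ Sum.inr) := by
        ext (i | j) <;> rfl
      rw [mulVecLin_apply, hw, fromCols_mulVec_sumElim]
      apply Submodule.add_mem
      · exact Submodule.mem_sup_left ⟨w ∘ Sum.inl, rfl⟩
      · have hC : C *ᵥ (w ∘ Sum.inr) =
            A *ᵥ (Ap *ᵥ (C *ᵥ (w ∘ Sum.inr))) + B *ᵥ (w ∘ Sum.inr) := by
          simp only [hB, Matrix.sub_mul, Matrix.one_mul, sub_mulVec, ← mulVec_mulVec]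
          abel
        rw [hC]
        exact Submodule.add_mem _
          (Submodule.mem_sup_left ⟨_, rfl⟩) (Submodule.mem_sup_right ⟨_, rfl⟩)
    · apply sup_le
      · rintro z ⟨u, rfl⟩
        exact ⟨Sum.elim u 0, by simp⟩
      · rintro z ⟨v, rfl⟩
        refine ⟨Sum.elim (-(Ap *ᵥ (C *ᵥ v))) v, ?_⟩
        simp only [mulVecLin_apply, fromCols_mulVec_sumElim, mulVec_neg, mulVec_mulVec]
        simp only [hB, Matrix.sub_mul, Matrix.one_mul, sub_mulVec, ← mulVec_mulVec]
        abel
  · rintro x ⟨u, rfl⟩ y ⟨v, rfl⟩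
    simp only [mulVecLin_apply]
    rw [show A *ᵥ u = u ᵥ* Aᵀ from (vecMul_transpose A u).symm, ← dotProduct_mulVec,
      mulVec_mulVec, hAtB, zero_mulVec, dotProduct_zero]
end
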